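/- The 6-dimensional Lie algebra g̃_{6.8}^{p=0}, with nonzero brackets [X₁,X₆] = -(b+c)X₁, [X₂,X₆] = bX₂, [X₃,X₆] = cX₃ where b, c are nonzero reals with b+c ≠ 0, admits no symplectic structure: every closed 2-form ω ∈ Λ²g̃* satisfies ω³ = 0. -/
import Mathlib


/-!
STATEMENT 14: The Lie algebra g̃_{6.8}^{p=0}, with nonzero brackets
[X₁,X₆] = −(b+c)X₁, [X₂,X₆] = bX₂, [X₃,X₆] = cX₃ (b, c, b+c nonzero) admits no
symplectic structure: every closed 2-form ω satisfies ω³ = 0, i.e. every closed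
2-form is degenerate (its Gram matrix has zero determinant — for a 2-form on a
6-dimensional space, ω ∧ ω ∧ ω ≠ 0 is equivalent to invertibility of the Gram matrix).

The Chevalley–Eilenberg differential is dα¹ = (b+c)α¹∧α⁶, dα² = −bα²∧α⁶,
dα³ = −cα³∧α⁶, dα⁴ = dα⁵ = dα⁶ = 0; the complex is modeled concretely below
(indices shifted down by one).
-/

open Finset Module

/-- The exterior algebra on six degree-one generators α¹,…,α⁶, as coordinates on the
basis of increasing wedge monomials indexed by subsets of `Fin 6`. -/
abbrev Lam : Type := Finset (Fin 6) → ℝ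

/-- The basis monomial α^S. -/
noncomputable def gen (S : Finset (Fin 6)) : Lam := Pi.single S 1

/-- Koszul sign when interleaving (the increasing enumerations of) `T` and `U`:
(−1) to the number of inversions. -/
def koszulSign (T U : Finset (Fin 6)) : ℝ :=
  (-1 : ℝ) ^ (((T ×ˢ U).filter fun p => p.2 < p.1).card)

/-- The wedge (exterior) product in coordinates. -/
noncomputable def wedge (f h : Lam) : Lam := fun S =>
  ∑ T ∈ S.powerset, koszulSign T (S \ T) * f T * h (S \ T)

/-- The Chevalley–Eilenberg differential: the unique antiderivation with dαⁱ = g i,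
given on the basis monomial α^S by d α^S = Σ_{i ∈ S} (−1)^{#{j ∈ S | j < i}} (g i) ∧ α^{S∖i}. -/
noncomputable def ceDiff (g : Fin 6 → Lam) : Lam →ₗ[ℝ] Lam :=
  (Pi.basisFun ℝ (Finset (Fin 6))).constr ℝ fun S =>
    ∑ i ∈ S, ((-1 : ℝ) ^ ((S.filter fun j => j < i).card)) • wedge (g i) (gen (S.erase i))

/-- The subspace Λᵏ of homogeneous elements of degree `k`. -/
def degSub (k : ℕ) : Submodule ℝ Lam where
  carrier := {f | ∀ S : Finset (Fin 6), S.card ≠ k → f S = 0}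
  add_mem' := by
    intro f g hf hg S hS
    simp only [Pi.add_apply, hf S hS, hg S hS, add_zero]
  zero_mem' := by intro S hS; rfl
  smul_mem' := by
    intro c f hf S hS
    simp only [Pi.smul_apply, hf S hS, smul_zero]

/-- Closed k-forms. -/
noncomputable def Zspace (D : Lam →ₗ[ℝ] Lam) (k : ℕ) : Submodule ℝ Lam :=
  degSub k ⊓ LinearMap.ker D

/-- Exact k-forms (the image of the (k−1)-forms under the differential). -/
noncomputable def Bspace (D : Lam →ₗ[ℝ] Lam) (k : ℕ) : Submodule ℝ Lam :=
  (degSub (k - 1)).map D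

/-- The Gram matrix of a 2-form ω: the antisymmetric matrix (ω(Xᵢ,Xⱼ))ᵢⱼ.  A 2-form on a
6-dimensional space is non-degenerate (equivalently ω ∧ ω ∧ ω ≠ 0) iff this matrix is
invertible, i.e. has nonzero determinant. -/
noncomputable def gram (f : Lam) : Matrix (Fin 6) (Fin 6) ℝ :=
  Matrix.of fun i j => if i < j then f {i, j} else if j < i then -(f {j, i}) else 0


/-- Generator differentials of g̃_{6.8}^{p=0} (0-indexed). -/
noncomputable def gDiff (b c : ℝ) : Fin 6 → Lam :=
  ![(b + c) • gen {0, 5}, (-b) • gen {1, 5}, (-c) • gen {2, 5}, 0, 0, 0]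



example (g : Fin 6 → Lam) (ω : Lam) (A : Finset (Fin 6)) :
    ceDiff g ω A = ∑ S : Finset (Fin 6), ω S •
      (∑ i ∈ S, ((-1 : ℝ) ^ ((S.filter fun j => j < i).card)) • wedge (g i) (gen (S.erase i))) A := by
  rw [ceDiff, Basis.constr_apply_fintype]
  simp [Finset.sum_apply]

lemma ceDiff_apply' (g : Fin 6 → Lam) (ω : Lam) (A : Finset (Fin 6)) :
    ceDiff g ω A = ∑ S : Finset (Fin 6), ω S •
      (∑ i ∈ S, ((-1 : ℝ) ^ ((S.filter fun j => j < i).card)) • wedge (g i) (gen (S.erase i))) A := by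
  rw [ceDiff, Basis.constr_apply_fintype]
  simp [Finset.sum_apply]

lemma wedge_gen (P Q A : Finset (Fin 6)) :
    wedge (gen P) (gen Q) A = if P ⊆ A ∧ A \ P = Q then koszulSign P Q else 0 := by
  unfold wedge gen
  by_cases h : P ⊆ A ∧ A \ P = Q
  · rw [Finset.sum_eq_single_of_mem P (Finset.mem_powerset.2 h.1)]
    · rw [h.2]; simp [h.1, Pi.single_eq_same]
    · intro T _ hT
      simp [Pi.single_apply, hT]
  · rw [if_neg h]
    apply Finset.sum_eq_zero
    intro T hT
    rcases eq_or_ne T P with rfl | hTP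
    · have : A \ T ≠ Q := by
        intro hq; exact h ⟨Finset.mem_powerset.1 hT, hq⟩
      simp [Pi.single_apply, this]
    · simp [Pi.single_apply, hTP]

lemma wedge_smul (r : ℝ) (f h : Lam) : wedge (r • f) h = r • wedge f h := by
  funext A
  simp [wedge, Finset.mul_sum]
  apply Finset.sum_congr rfl
  intros; ring

lemma wedge_zero (h : Lam) : wedge (0 : Lam) h = 0 := by
  funext A; simp [wedge]

lemma card2 : (Finset.univ.filter fun S : Finset (Fin 6) => S.card = 2) =
    {{0,1},{0,2},{0,3},{0,4},{0,5},{1,2},{1,3},{1,4},{1,5},{2,3},{2,4},{2,5},{3,4},{3,5},{4,5}} := by decide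

lemma ks_0_1 : koszulSign {0,5} {1} = -1 := by rw [show koszulSign {0,5} {1} = ((-1:ℝ))^(1:ℕ) from rfl]; norm_num
lemma ks_0_2 : koszulSign {0,5} {2} = -1 := by rw [show koszulSign {0,5} {2} = ((-1:ℝ))^(1:ℕ) from rfl]; norm_num
lemma ks_0_3 : koszulSign {0,5} {3} = -1 := by rw [show koszulSign {0,5} {3} = ((-1:ℝ))^(1:ℕ) from rfl]; norm_num
lemma ks_0_4 : koszulSign {0,5} {4} = -1 := by rw [show koszulSign {0,5} {4} = ((-1:ℝ))^(1:ℕ) from rfl]; norm_num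
lemma ks_1_0 : koszulSign {1,5} {0} = 1 := by rw [show koszulSign {1,5} {0} = ((-1:ℝ))^(2:ℕ) from rfl]; norm_num
lemma ks_1_2 : koszulSign {1,5} {2} = -1 := by rw [show koszulSign {1,5} {2} = ((-1:ℝ))^(1:ℕ) from rfl]; norm_num
lemma ks_1_3 : koszulSign {1,5} {3} = -1 := by rw [show koszulSign {1,5} {3} = ((-1:ℝ))^(1:ℕ) from rfl]; norm_num
lemma ks_1_4 : koszulSign {1,5} {4} = -1 := by rw [show koszulSign {1,5} {4} = ((-1:ℝ))^(1:ℕ) from rfl]; norm_num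
lemma ks_2_0 : koszulSign {2,5} {0} = 1 := by rw [show koszulSign {2,5} {0} = ((-1:ℝ))^(2:ℕ) from rfl]; norm_num
lemma ks_2_1 : koszulSign {2,5} {1} = 1 := by rw [show koszulSign {2,5} {1} = ((-1:ℝ))^(2:ℕ) from rfl]; norm_num
lemma ks_2_3 : koszulSign {2,5} {3} = -1 := by rw [show koszulSign {2,5} {3} = ((-1:ℝ))^(1:ℕ) from rfl]; norm_num
lemma ks_2_4 : koszulSign {2,5} {4} = -1 := by rw [show koszulSign {2,5} {4} = ((-1:ℝ))^(1:ℕ) from rfl]; norm_num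
lemma ks_3_0 : koszulSign {3,5} {0} = 1 := by rw [show koszulSign {3,5} {0} = ((-1:ℝ))^(2:ℕ) from rfl]; norm_num
lemma ks_3_1 : koszulSign {3,5} {1} = 1 := by rw [show koszulSign {3,5} {1} = ((-1:ℝ))^(2:ℕ) from rfl]; norm_num
lemma ks_3_2 : koszulSign {3,5} {2} = 1 := by rw [show koszulSign {3,5} {2} = ((-1:ℝ))^(2:ℕ) from rfl]; norm_num
lemma ks_3_4 : koszulSign {3,5} {4} = -1 := by rw [show koszulSign {3,5} {4} = ((-1:ℝ))^(1:ℕ) from rfl]; norm_num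
lemma ks_4_0 : koszulSign {4,5} {0} = 1 := by rw [show koszulSign {4,5} {0} = ((-1:ℝ))^(2:ℕ) from rfl]; norm_num
lemma ks_4_1 : koszulSign {4,5} {1} = 1 := by rw [show koszulSign {4,5} {1} = ((-1:ℝ))^(2:ℕ) from rfl]; norm_num
lemma ks_4_2 : koszulSign {4,5} {2} = 1 := by rw [show koszulSign {4,5} {2} = ((-1:ℝ))^(2:ℕ) from rfl]; norm_num
lemma ks_4_3 : koszulSign {4,5} {3} = 1 := by rw [show koszulSign {4,5} {3} = ((-1:ℝ))^(2:ℕ) from rfl]; norm_num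
lemma er_0_1_l : ({0,1} : Finset (Fin 6)).erase 0 = {1} := by decide
lemma er_0_1_r : ({0,1} : Finset (Fin 6)).erase 1 = {0} := by decide
lemma er_0_2_l : ({0,2} : Finset (Fin 6)).erase 0 = {2} := by decide
lemma er_0_2_r : ({0,2} : Finset (Fin 6)).erase 2 = {0} := by decide
lemma er_0_3_l : ({0,3} : Finset (Fin 6)).erase 0 = {3} := by decide
lemma er_0_3_r : ({0,3} : Finset (Fin 6)).erase 3 = {0} := by decide
lemma er_0_4_l : ({0,4} : Finset (Fin 6)).erase 0 = {4} := by decide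
lemma er_0_4_r : ({0,4} : Finset (Fin 6)).erase 4 = {0} := by decide
lemma er_0_5_l : ({0,5} : Finset (Fin 6)).erase 0 = {5} := by decide
lemma er_0_5_r : ({0,5} : Finset (Fin 6)).erase 5 = {0} := by decide
lemma er_1_2_l : ({1,2} : Finset (Fin 6)).erase 1 = {2} := by decide
lemma er_1_2_r : ({1,2} : Finset (Fin 6)).erase 2 = {1} := by decide
lemma er_1_3_l : ({1,3} : Finset (Fin 6)).erase 1 = {3} := by decide
lemma er_1_3_r : ({1,3} : Finset (Fin 6)).erase 3 = {1} := by decide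
lemma er_1_4_l : ({1,4} : Finset (Fin 6)).erase 1 = {4} := by decide
lemma er_1_4_r : ({1,4} : Finset (Fin 6)).erase 4 = {1} := by decide
lemma er_1_5_l : ({1,5} : Finset (Fin 6)).erase 1 = {5} := by decide
lemma er_1_5_r : ({1,5} : Finset (Fin 6)).erase 5 = {1} := by decide
lemma er_2_3_l : ({2,3} : Finset (Fin 6)).erase 2 = {3} := by decide
lemma er_2_3_r : ({2,3} : Finset (Fin 6)).erase 3 = {2} := by decide
lemma er_2_4_l : ({2,4} : Finset (Fin 6)).erase 2 = {4} := by decide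
lemma er_2_4_r : ({2,4} : Finset (Fin 6)).erase 4 = {2} := by decide
lemma er_2_5_l : ({2,5} : Finset (Fin 6)).erase 2 = {5} := by decide
lemma er_2_5_r : ({2,5} : Finset (Fin 6)).erase 5 = {2} := by decide
lemma er_3_4_l : ({3,4} : Finset (Fin 6)).erase 3 = {4} := by decide
lemma er_3_4_r : ({3,4} : Finset (Fin 6)).erase 4 = {3} := by decide
lemma er_3_5_l : ({3,5} : Finset (Fin 6)).erase 3 = {5} := by decide
lemma er_3_5_r : ({3,5} : Finset (Fin 6)).erase 5 = {3} := by decide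
lemma er_4_5_l : ({4,5} : Finset (Fin 6)).erase 4 = {5} := by decide
lemma er_4_5_r : ({4,5} : Finset (Fin 6)).erase 5 = {4} := by decide
lemma gD_0 (b c : ℝ) : gDiff b c 0 = (b + c) • gen {0, 5} := rfl
lemma gD_1 (b c : ℝ) : gDiff b c 1 = (-b) • gen {1, 5} := rfl
lemma gD_2 (b c : ℝ) : gDiff b c 2 = (-c) • gen {2, 5} := rfl
lemma gD_3 (b c : ℝ) : gDiff b c 3 = (0:Lam) := rfl
lemma gD_4 (b c : ℝ) : gDiff b c 4 = (0:Lam) := rfl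
lemma gD_5 (b c : ℝ) : gDiff b c 5 = (0:Lam) := rfl

lemma cond_0_1 (b c : ℝ) (hb : b ≠ 0) (hc : c ≠ 0) (hbc : b + c ≠ 0) (ω : Lam) (hω : ω ∈ degSub 2)
    (hd : ceDiff (gDiff b c) ω = 0) : ω {0,1} = 0 := by
  have h := congrFun hd ({0,1,5} : Finset (Fin 6))
  rw [ceDiff_apply'] at h
  rw [← Finset.sum_filter_of_ne (p := fun S : Finset (Fin 6) => S.card = 2)
    (fun S _ hne => by
      by_contra h2
      exact hne (by rw [hω S h2, zero_smul])), card2] at h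
  simp (config := { decide := true }) only [Finset.sum_insert, Finset.sum_singleton,
    Finset.mem_insert, Finset.mem_singleton, gD_0, gD_1, gD_2, gD_3, gD_4, gD_5,
    wedge_smul, wedge_zero, Pi.smul_apply, Pi.zero_apply, Pi.add_apply, smul_eq_mul,
    er_0_1_l, er_0_1_r, er_0_2_l, er_0_2_r, er_0_3_l, er_0_3_r, er_0_4_l, er_0_4_r,
    er_0_5_l, er_0_5_r, er_1_2_l, er_1_2_r, er_1_3_l, er_1_3_r, er_1_4_l, er_1_4_r,
    er_1_5_l, er_1_5_r, er_2_3_l, er_2_3_r, er_2_4_l, er_2_4_r, er_2_5_l, er_2_5_r,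
    er_3_4_l, er_3_4_r, er_3_5_l, er_3_5_r, er_4_5_l, er_4_5_r,
    Finset.filter_insert, Finset.filter_singleton, Finset.card_empty, Finset.card_singleton,
    Finset.card_insert_of_notMem, Finset.notMem_empty, Finset.notMem_singleton,
    if_true, if_false, wedge_gen,
    ks_0_1, ks_0_2, ks_0_3, ks_0_4, ks_1_0, ks_1_2, ks_1_3, ks_1_4,
    ks_2_0, ks_2_1, ks_2_3, ks_2_4, ks_3_0, ks_3_1, ks_3_2, ks_3_4,
    ks_4_0, ks_4_1, ks_4_2, ks_4_3] at h
  have h2 : ((-(b+c)) + b) * ω {0,1} = 0 := by linear_combination h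
  rcases mul_eq_zero.mp h2 with h3 | h3
  · exfalso
    first
      | exact hb (by linarith)
      | exact hc (by linarith)
      | exact hbc (by linarith)
  · exact h3

lemma cond_0_2 (b c : ℝ) (hb : b ≠ 0) (hc : c ≠ 0) (hbc : b + c ≠ 0) (ω : Lam) (hω : ω ∈ degSub 2)
    (hd : ceDiff (gDiff b c) ω = 0) : ω {0,2} = 0 := by
  have h := congrFun hd ({0,2,5} : Finset (Fin 6))
  rw [ceDiff_apply'] at h
  rw [← Finset.sum_filter_of_ne (p := fun S : Finset (Fin 6) => S.card = 2)
    (fun S _ hne => by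
      by_contra h2
      exact hne (by rw [hω S h2, zero_smul])), card2] at h
  simp (config := { decide := true }) only [Finset.sum_insert, Finset.sum_singleton,
    Finset.mem_insert, Finset.mem_singleton, gD_0, gD_1, gD_2, gD_3, gD_4, gD_5,
    wedge_smul, wedge_zero, Pi.smul_apply, Pi.zero_apply, Pi.add_apply, smul_eq_mul,
    er_0_1_l, er_0_1_r, er_0_2_l, er_0_2_r, er_0_3_l, er_0_3_r, er_0_4_l, er_0_4_r,
    er_0_5_l, er_0_5_r, er_1_2_l, er_1_2_r, er_1_3_l, er_1_3_r, er_1_4_l, er_1_4_r,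
    er_1_5_l, er_1_5_r, er_2_3_l, er_2_3_r, er_2_4_l, er_2_4_r, er_2_5_l, er_2_5_r,
    er_3_4_l, er_3_4_r, er_3_5_l, er_3_5_r, er_4_5_l, er_4_5_r,
    Finset.filter_insert, Finset.filter_singleton, Finset.card_empty, Finset.card_singleton,
    Finset.card_insert_of_notMem, Finset.notMem_empty, Finset.notMem_singleton,
    if_true, if_false, wedge_gen,
    ks_0_1, ks_0_2, ks_0_3, ks_0_4, ks_1_0, ks_1_2, ks_1_3, ks_1_4,
    ks_2_0, ks_2_1, ks_2_3, ks_2_4, ks_3_0, ks_3_1, ks_3_2, ks_3_4,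
    ks_4_0, ks_4_1, ks_4_2, ks_4_3] at h
  have h2 : ((-(b+c)) + c) * ω {0,2} = 0 := by linear_combination h
  rcases mul_eq_zero.mp h2 with h3 | h3
  · exfalso
    first
      | exact hb (by linarith)
      | exact hc (by linarith)
      | exact hbc (by linarith)
  · exact h3

lemma cond_0_3 (b c : ℝ) (hb : b ≠ 0) (hc : c ≠ 0) (hbc : b + c ≠ 0) (ω : Lam) (hω : ω ∈ degSub 2)
    (hd : ceDiff (gDiff b c) ω = 0) : ω {0,3} = 0 := by
  have h := congrFun hd ({0,3,5} : Finset (Fin 6))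
  rw [ceDiff_apply'] at h
  rw [← Finset.sum_filter_of_ne (p := fun S : Finset (Fin 6) => S.card = 2)
    (fun S _ hne => by
      by_contra h2
      exact hne (by rw [hω S h2, zero_smul])), card2] at h
  simp (config := { decide := true }) only [Finset.sum_insert, Finset.sum_singleton,
    Finset.mem_insert, Finset.mem_singleton, gD_0, gD_1, gD_2, gD_3, gD_4, gD_5,
    wedge_smul, wedge_zero, Pi.smul_apply, Pi.zero_apply, Pi.add_apply, smul_eq_mul,
    er_0_1_l, er_0_1_r, er_0_2_l, er_0_2_r, er_0_3_l, er_0_3_r, er_0_4_l, er_0_4_r,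
    er_0_5_l, er_0_5_r, er_1_2_l, er_1_2_r, er_1_3_l, er_1_3_r, er_1_4_l, er_1_4_r,
    er_1_5_l, er_1_5_r, er_2_3_l, er_2_3_r, er_2_4_l, er_2_4_r, er_2_5_l, er_2_5_r,
    er_3_4_l, er_3_4_r, er_3_5_l, er_3_5_r, er_4_5_l, er_4_5_r,
    Finset.filter_insert, Finset.filter_singleton, Finset.card_empty, Finset.card_singleton,
    Finset.card_insert_of_notMem, Finset.notMem_empty, Finset.notMem_singleton,
    if_true, if_false, wedge_gen,
    ks_0_1, ks_0_2, ks_0_3, ks_0_4, ks_1_0, ks_1_2, ks_1_3, ks_1_4,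
    ks_2_0, ks_2_1, ks_2_3, ks_2_4, ks_3_0, ks_3_1, ks_3_2, ks_3_4,
    ks_4_0, ks_4_1, ks_4_2, ks_4_3] at h
  have h2 : ((-(b+c)) + (0:ℝ)) * ω {0,3} = 0 := by linear_combination h
  rcases mul_eq_zero.mp h2 with h3 | h3
  · exfalso
    first
      | exact hb (by linarith)
      | exact hc (by linarith)
      | exact hbc (by linarith)
  · exact h3

lemma cond_0_4 (b c : ℝ) (hb : b ≠ 0) (hc : c ≠ 0) (hbc : b + c ≠ 0) (ω : Lam) (hω : ω ∈ degSub 2)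
    (hd : ceDiff (gDiff b c) ω = 0) : ω {0,4} = 0 := by
  have h := congrFun hd ({0,4,5} : Finset (Fin 6))
  rw [ceDiff_apply'] at h
  rw [← Finset.sum_filter_of_ne (p := fun S : Finset (Fin 6) => S.card = 2)
    (fun S _ hne => by
      by_contra h2
      exact hne (by rw [hω S h2, zero_smul])), card2] at h
  simp (config := { decide := true }) only [Finset.sum_insert, Finset.sum_singleton,
    Finset.mem_insert, Finset.mem_singleton, gD_0, gD_1, gD_2, gD_3, gD_4, gD_5,
    wedge_smul, wedge_zero, Pi.smul_apply, Pi.zero_apply, Pi.add_apply, smul_eq_mul,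
    er_0_1_l, er_0_1_r, er_0_2_l, er_0_2_r, er_0_3_l, er_0_3_r, er_0_4_l, er_0_4_r,
    er_0_5_l, er_0_5_r, er_1_2_l, er_1_2_r, er_1_3_l, er_1_3_r, er_1_4_l, er_1_4_r,
    er_1_5_l, er_1_5_r, er_2_3_l, er_2_3_r, er_2_4_l, er_2_4_r, er_2_5_l, er_2_5_r,
    er_3_4_l, er_3_4_r, er_3_5_l, er_3_5_r, er_4_5_l, er_4_5_r,
    Finset.filter_insert, Finset.filter_singleton, Finset.card_empty, Finset.card_singleton,
    Finset.card_insert_of_notMem, Finset.notMem_empty, Finset.notMem_singleton,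
    if_true, if_false, wedge_gen,
    ks_0_1, ks_0_2, ks_0_3, ks_0_4, ks_1_0, ks_1_2, ks_1_3, ks_1_4,
    ks_2_0, ks_2_1, ks_2_3, ks_2_4, ks_3_0, ks_3_1, ks_3_2, ks_3_4,
    ks_4_0, ks_4_1, ks_4_2, ks_4_3] at h
  have h2 : ((-(b+c)) + (0:ℝ)) * ω {0,4} = 0 := by linear_combination h
  rcases mul_eq_zero.mp h2 with h3 | h3
  · exfalso
    first
      | exact hb (by linarith)
      | exact hc (by linarith)
      | exact hbc (by linarith)
  · exact h3

lemma cond_1_2 (b c : ℝ) (hb : b ≠ 0) (hc : c ≠ 0) (hbc : b + c ≠ 0) (ω : Lam) (hω : ω ∈ degSub 2)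
    (hd : ceDiff (gDiff b c) ω = 0) : ω {1,2} = 0 := by
  have h := congrFun hd ({1,2,5} : Finset (Fin 6))
  rw [ceDiff_apply'] at h
  rw [← Finset.sum_filter_of_ne (p := fun S : Finset (Fin 6) => S.card = 2)
    (fun S _ hne => by
      by_contra h2
      exact hne (by rw [hω S h2, zero_smul])), card2] at h
  simp (config := { decide := true }) only [Finset.sum_insert, Finset.sum_singleton,
    Finset.mem_insert, Finset.mem_singleton, gD_0, gD_1, gD_2, gD_3, gD_4, gD_5,
    wedge_smul, wedge_zero, Pi.smul_apply, Pi.zero_apply, Pi.add_apply, smul_eq_mul,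
    er_0_1_l, er_0_1_r, er_0_2_l, er_0_2_r, er_0_3_l, er_0_3_r, er_0_4_l, er_0_4_r,
    er_0_5_l, er_0_5_r, er_1_2_l, er_1_2_r, er_1_3_l, er_1_3_r, er_1_4_l, er_1_4_r,
    er_1_5_l, er_1_5_r, er_2_3_l, er_2_3_r, er_2_4_l, er_2_4_r, er_2_5_l, er_2_5_r,
    er_3_4_l, er_3_4_r, er_3_5_l, er_3_5_r, er_4_5_l, er_4_5_r,
    Finset.filter_insert, Finset.filter_singleton, Finset.card_empty, Finset.card_singleton,
    Finset.card_insert_of_notMem, Finset.notMem_empty, Finset.notMem_singleton,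
    if_true, if_false, wedge_gen,
    ks_0_1, ks_0_2, ks_0_3, ks_0_4, ks_1_0, ks_1_2, ks_1_3, ks_1_4,
    ks_2_0, ks_2_1, ks_2_3, ks_2_4, ks_3_0, ks_3_1, ks_3_2, ks_3_4,
    ks_4_0, ks_4_1, ks_4_2, ks_4_3] at h
  have h2 : (b + c) * ω {1,2} = 0 := by linear_combination h
  rcases mul_eq_zero.mp h2 with h3 | h3
  · exfalso
    first
      | exact hb (by linarith)
      | exact hc (by linarith)
      | exact hbc (by linarith)
  · exact h3

lemma cond_1_3 (b c : ℝ) (hb : b ≠ 0) (hc : c ≠ 0) (hbc : b + c ≠ 0) (ω : Lam) (hω : ω ∈ degSub 2)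
    (hd : ceDiff (gDiff b c) ω = 0) : ω {1,3} = 0 := by
  have h := congrFun hd ({1,3,5} : Finset (Fin 6))
  rw [ceDiff_apply'] at h
  rw [← Finset.sum_filter_of_ne (p := fun S : Finset (Fin 6) => S.card = 2)
    (fun S _ hne => by
      by_contra h2
      exact hne (by rw [hω S h2, zero_smul])), card2] at h
  simp (config := { decide := true }) only [Finset.sum_insert, Finset.sum_singleton,
    Finset.mem_insert, Finset.mem_singleton, gD_0, gD_1, gD_2, gD_3, gD_4, gD_5,
    wedge_smul, wedge_zero, Pi.smul_apply, Pi.zero_apply, Pi.add_apply, smul_eq_mul,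
    er_0_1_l, er_0_1_r, er_0_2_l, er_0_2_r, er_0_3_l, er_0_3_r, er_0_4_l, er_0_4_r,
    er_0_5_l, er_0_5_r, er_1_2_l, er_1_2_r, er_1_3_l, er_1_3_r, er_1_4_l, er_1_4_r,
    er_1_5_l, er_1_5_r, er_2_3_l, er_2_3_r, er_2_4_l, er_2_4_r, er_2_5_l, er_2_5_r,
    er_3_4_l, er_3_4_r, er_3_5_l, er_3_5_r, er_4_5_l, er_4_5_r,
    Finset.filter_insert, Finset.filter_singleton, Finset.card_empty, Finset.card_singleton,
    Finset.card_insert_of_notMem, Finset.notMem_empty, Finset.notMem_singleton,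
    if_true, if_false, wedge_gen,
    ks_0_1, ks_0_2, ks_0_3, ks_0_4, ks_1_0, ks_1_2, ks_1_3, ks_1_4,
    ks_2_0, ks_2_1, ks_2_3, ks_2_4, ks_3_0, ks_3_1, ks_3_2, ks_3_4,
    ks_4_0, ks_4_1, ks_4_2, ks_4_3] at h
  have h2 : (b + (0:ℝ)) * ω {1,3} = 0 := by linear_combination h
  rcases mul_eq_zero.mp h2 with h3 | h3
  · exfalso
    first
      | exact hb (by linarith)
      | exact hc (by linarith)
      | exact hbc (by linarith)
  · exact h3

lemma cond_1_4 (b c : ℝ) (hb : b ≠ 0) (hc : c ≠ 0) (hbc : b + c ≠ 0) (ω : Lam) (hω : ω ∈ degSub 2)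
    (hd : ceDiff (gDiff b c) ω = 0) : ω {1,4} = 0 := by
  have h := congrFun hd ({1,4,5} : Finset (Fin 6))
  rw [ceDiff_apply'] at h
  rw [← Finset.sum_filter_of_ne (p := fun S : Finset (Fin 6) => S.card = 2)
    (fun S _ hne => by
      by_contra h2
      exact hne (by rw [hω S h2, zero_smul])), card2] at h
  simp (config := { decide := true }) only [Finset.sum_insert, Finset.sum_singleton,
    Finset.mem_insert, Finset.mem_singleton, gD_0, gD_1, gD_2, gD_3, gD_4, gD_5,
    wedge_smul, wedge_zero, Pi.smul_apply, Pi.zero_apply, Pi.add_apply, smul_eq_mul,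
    er_0_1_l, er_0_1_r, er_0_2_l, er_0_2_r, er_0_3_l, er_0_3_r, er_0_4_l, er_0_4_r,
    er_0_5_l, er_0_5_r, er_1_2_l, er_1_2_r, er_1_3_l, er_1_3_r, er_1_4_l, er_1_4_r,
    er_1_5_l, er_1_5_r, er_2_3_l, er_2_3_r, er_2_4_l, er_2_4_r, er_2_5_l, er_2_5_r,
    er_3_4_l, er_3_4_r, er_3_5_l, er_3_5_r, er_4_5_l, er_4_5_r,
    Finset.filter_insert, Finset.filter_singleton, Finset.card_empty, Finset.card_singleton,
    Finset.card_insert_of_notMem, Finset.notMem_empty, Finset.notMem_singleton,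
    if_true, if_false, wedge_gen,
    ks_0_1, ks_0_2, ks_0_3, ks_0_4, ks_1_0, ks_1_2, ks_1_3, ks_1_4,
    ks_2_0, ks_2_1, ks_2_3, ks_2_4, ks_3_0, ks_3_1, ks_3_2, ks_3_4,
    ks_4_0, ks_4_1, ks_4_2, ks_4_3] at h
  have h2 : (b + (0:ℝ)) * ω {1,4} = 0 := by linear_combination h
  rcases mul_eq_zero.mp h2 with h3 | h3
  · exfalso
    first
      | exact hb (by linarith)
      | exact hc (by linarith)
      | exact hbc (by linarith)
  · exact h3

lemma cond_2_3 (b c : ℝ) (hb : b ≠ 0) (hc : c ≠ 0) (hbc : b + c ≠ 0) (ω : Lam) (hω : ω ∈ degSub 2)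
    (hd : ceDiff (gDiff b c) ω = 0) : ω {2,3} = 0 := by
  have h := congrFun hd ({2,3,5} : Finset (Fin 6))
  rw [ceDiff_apply'] at h
  rw [← Finset.sum_filter_of_ne (p := fun S : Finset (Fin 6) => S.card = 2)
    (fun S _ hne => by
      by_contra h2
      exact hne (by rw [hω S h2, zero_smul])), card2] at h
  simp (config := { decide := true }) only [Finset.sum_insert, Finset.sum_singleton,
    Finset.mem_insert, Finset.mem_singleton, gD_0, gD_1, gD_2, gD_3, gD_4, gD_5,
    wedge_smul, wedge_zero, Pi.smul_apply, Pi.zero_apply, Pi.add_apply, smul_eq_mul,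
    er_0_1_l, er_0_1_r, er_0_2_l, er_0_2_r, er_0_3_l, er_0_3_r, er_0_4_l, er_0_4_r,
    er_0_5_l, er_0_5_r, er_1_2_l, er_1_2_r, er_1_3_l, er_1_3_r, er_1_4_l, er_1_4_r,
    er_1_5_l, er_1_5_r, er_2_3_l, er_2_3_r, er_2_4_l, er_2_4_r, er_2_5_l, er_2_5_r,
    er_3_4_l, er_3_4_r, er_3_5_l, er_3_5_r, er_4_5_l, er_4_5_r,
    Finset.filter_insert, Finset.filter_singleton, Finset.card_empty, Finset.card_singleton,
    Finset.card_insert_of_notMem, Finset.notMem_empty, Finset.notMem_singleton,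
    if_true, if_false, wedge_gen,
    ks_0_1, ks_0_2, ks_0_3, ks_0_4, ks_1_0, ks_1_2, ks_1_3, ks_1_4,
    ks_2_0, ks_2_1, ks_2_3, ks_2_4, ks_3_0, ks_3_1, ks_3_2, ks_3_4,
    ks_4_0, ks_4_1, ks_4_2, ks_4_3] at h
  have h2 : (c + (0:ℝ)) * ω {2,3} = 0 := by linear_combination h
  rcases mul_eq_zero.mp h2 with h3 | h3
  · exfalso
    first
      | exact hb (by linarith)
      | exact hc (by linarith)
      | exact hbc (by linarith)
  · exact h3

lemma cond_2_4 (b c : ℝ) (hb : b ≠ 0) (hc : c ≠ 0) (hbc : b + c ≠ 0) (ω : Lam) (hω : ω ∈ degSub 2)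
    (hd : ceDiff (gDiff b c) ω = 0) : ω {2,4} = 0 := by
  have h := congrFun hd ({2,4,5} : Finset (Fin 6))
  rw [ceDiff_apply'] at h
  rw [← Finset.sum_filter_of_ne (p := fun S : Finset (Fin 6) => S.card = 2)
    (fun S _ hne => by
      by_contra h2
      exact hne (by rw [hω S h2, zero_smul])), card2] at h
  simp (config := { decide := true }) only [Finset.sum_insert, Finset.sum_singleton,
    Finset.mem_insert, Finset.mem_singleton, gD_0, gD_1, gD_2, gD_3, gD_4, gD_5,
    wedge_smul, wedge_zero, Pi.smul_apply, Pi.zero_apply, Pi.add_apply, smul_eq_mul,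
    er_0_1_l, er_0_1_r, er_0_2_l, er_0_2_r, er_0_3_l, er_0_3_r, er_0_4_l, er_0_4_r,
    er_0_5_l, er_0_5_r, er_1_2_l, er_1_2_r, er_1_3_l, er_1_3_r, er_1_4_l, er_1_4_r,
    er_1_5_l, er_1_5_r, er_2_3_l, er_2_3_r, er_2_4_l, er_2_4_r, er_2_5_l, er_2_5_r,
    er_3_4_l, er_3_4_r, er_3_5_l, er_3_5_r, er_4_5_l, er_4_5_r,
    Finset.filter_insert, Finset.filter_singleton, Finset.card_empty, Finset.card_singleton,
    Finset.card_insert_of_notMem, Finset.notMem_empty, Finset.notMem_singleton,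
    if_true, if_false, wedge_gen,
    ks_0_1, ks_0_2, ks_0_3, ks_0_4, ks_1_0, ks_1_2, ks_1_3, ks_1_4,
    ks_2_0, ks_2_1, ks_2_3, ks_2_4, ks_3_0, ks_3_1, ks_3_2, ks_3_4,
    ks_4_0, ks_4_1, ks_4_2, ks_4_3] at h
  have h2 : (c + (0:ℝ)) * ω {2,4} = 0 := by linear_combination h
  rcases mul_eq_zero.mp h2 with h3 | h3
  · exfalso
    first
      | exact hb (by linarith)
      | exact hc (by linarith)
      | exact hbc (by linarith)
  · exact h3

theorem no_symplectic_g68 (b c : ℝ) (hb : b ≠ 0) (hc : c ≠ 0) (hbc : b + c ≠ 0) :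
    ∀ ω ∈ degSub 2 ⊓ LinearMap.ker (ceDiff (gDiff b c)), (gram ω).det = 0 := by
  rintro ω ⟨hω, hker⟩
  have hd : ceDiff (gDiff b c) ω = 0 := LinearMap.mem_ker.mp hker
  have z01 := cond_0_1 b c hb hc hbc ω hω hd
  have z02 := cond_0_2 b c hb hc hbc ω hω hd
  have z03 := cond_0_3 b c hb hc hbc ω hω hd
  have z04 := cond_0_4 b c hb hc hbc ω hω hd
  have z12 := cond_1_2 b c hb hc hbc ω hω hd
  have z13 := cond_1_3 b c hb hc hbc ω hω hd
  have z14 := cond_1_4 b c hb hc hbc ω hω hd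
  by_cases h05 : ω {0,5} = 0
  · apply Matrix.det_eq_zero_of_row_eq_zero 0
    intro j
    fin_cases j <;>
      simp (config := { decide := true }) [gram, z01, z02, z03, z04, h05]
  · rw [← Matrix.det_updateRow_add_smul_self (gram ω)
      (show (1 : Fin 6) ≠ 0 by decide) (-(ω {1,5} / ω {0,5}))]
    apply Matrix.det_eq_zero_of_row_eq_zero 1
    intro j
    rw [Matrix.updateRow_self]
    fin_cases j <;>
      simp (config := { decide := true }) [gram, z01, z02, z03, z04, z12, z13, z14, h05] <;>
      field_simp
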